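/- Let n ≥ 2 be a natural number, let α ≥ 7 be a real number, and let t be a natural number with t ≥ 4·n·log n. If X is a binomial random variable with t trials and success probability 2/n, then Pr[X < t/(α·n)] ≤ n^(−3). -/

import Mathlib

open scoped ENNReal

/-- Lower tail: if `X ~ Bin(t, 2/n)` with `n ≥ 2`, `α ≥ 7`, `t ≥ 4·n·log n`, then
`Pr[X < t/(α·n)] ≤ n⁻³`. -/
theorem binomial_lower_tail (n t : ℕ) (α : ℝ) (hn : 2 ≤ n) (hα : 7 ≤ α)
    (ht : 4 * (n : ℝ) * Real.log n ≤ t)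
    (hp : (2 : ℝ≥0∞) / n ≤ 1) :
    (PMF.binomial ((2 : ℝ≥0∞) / n).toNNReal
      (by simpa using ENNReal.toNNReal_mono ENNReal.one_ne_top hp) t).toMeasure {k : Fin (t + 1) | (k : ℝ) < t / (α * n)} ≤
      ((n : ℝ≥0∞) ^ 3)⁻¹ := by
  classical
  have hp' : ((2 : ℝ≥0∞) / n).toNNReal ≤ 1 := by
    simpa using ENNReal.toNNReal_mono ENNReal.one_ne_top hp
  set M : ℝ := t / (α * n) with hM
  have hn0 : (0:ℝ) < n := by positivity
  have hset : {k : Fin (t + 1) | (k : ℝ) < M} =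
      ↑(Finset.univ.filter (fun k : Fin (t+1) => (k : ℝ) < M)) := by
    ext k; simp
  rw [hset, PMF.toMeasure_apply_finset]
  have hstep : ∀ k ∈ Finset.univ.filter (fun k : Fin (t+1) => (k : ℝ) < M),
      PMF.binomial ((2:ℝ≥0∞)/n).toNNReal hp' t k ≤
        (2:ℝ≥0∞) ^ M * ((2:ℝ≥0∞)⁻¹ ^ (k:ℕ) * PMF.binomial ((2:ℝ≥0∞)/n).toNNReal hp' t k) := by
    intro k hk
    rw [Finset.mem_filter] at hk
    have h1 : (1:ℝ≥0∞) ≤ (2:ℝ≥0∞) ^ M * (2:ℝ≥0∞)⁻¹ ^ (k:ℕ) := by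
      have h2 : (2:ℝ≥0∞)⁻¹ ^ (k:ℕ) = (2:ℝ≥0∞) ^ (-(k:ℝ)) := by
        rw [← ENNReal.inv_pow, ENNReal.rpow_neg, ENNReal.rpow_natCast]
      rw [h2, ← ENNReal.rpow_add _ _ (by norm_num) (by norm_num)]
      calc (1:ℝ≥0∞) = (2:ℝ≥0∞) ^ (0:ℝ) := by rw [ENNReal.rpow_zero]
        _ ≤ (2:ℝ≥0∞) ^ (M + -(k:ℝ)) := by
            apply ENNReal.rpow_le_rpow_of_exponent_le (by norm_num)
            have := hk.2; linarith
    calc PMF.binomial ((2:ℝ≥0∞)/n).toNNReal hp' t k = 1 * PMF.binomial ((2:ℝ≥0∞)/n).toNNReal hp' t k := (one_mul _).symm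
      _ ≤ ((2:ℝ≥0∞) ^ M * (2:ℝ≥0∞)⁻¹ ^ (k:ℕ)) * PMF.binomial ((2:ℝ≥0∞)/n).toNNReal hp' t k :=
          mul_le_mul_left h1 _
      _ = (2:ℝ≥0∞) ^ M * ((2:ℝ≥0∞)⁻¹ ^ (k:ℕ) * PMF.binomial ((2:ℝ≥0∞)/n).toNNReal hp' t k) := by ring
  have key : ∑ k ∈ Finset.univ.filter (fun k : Fin (t+1) => (k : ℝ) < M),
      PMF.binomial ((2:ℝ≥0∞)/n).toNNReal hp' t k ≤
      (2:ℝ≥0∞) ^ M * ∑ k : Fin (t+1), (2:ℝ≥0∞)⁻¹ ^ (k:ℕ) * PMF.binomial ((2:ℝ≥0∞)/n).toNNReal hp' t k := by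
    calc _ ≤ ∑ k ∈ Finset.univ.filter (fun k : Fin (t+1) => (k : ℝ) < M),
          (2:ℝ≥0∞) ^ M * ((2:ℝ≥0∞)⁻¹ ^ (k:ℕ) * PMF.binomial ((2:ℝ≥0∞)/n).toNNReal hp' t k) :=
        Finset.sum_le_sum hstep
      _ ≤ ∑ k : Fin (t+1), (2:ℝ≥0∞) ^ M * ((2:ℝ≥0∞)⁻¹ ^ (k:ℕ) * PMF.binomial ((2:ℝ≥0∞)/n).toNNReal hp' t k) :=
        Finset.sum_le_sum_of_subset (Finset.filter_subset _ _)
      _ = _ := by rw [← Finset.mul_sum]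
  refine le_trans key ?_
  have hne : (n:ℝ≥0∞) ≠ 0 := by
    simp only [ne_eq, Nat.cast_eq_zero]; omega
  have hnt : (n:ℝ≥0∞) ≠ ⊤ := ENNReal.natCast_ne_top n
  have hsum : ∑ k : Fin (t+1), (2:ℝ≥0∞)⁻¹ ^ (k:ℕ) * PMF.binomial ((2:ℝ≥0∞)/n).toNNReal hp' t k
      = (1 - 1/(n:ℝ≥0∞)) ^ t := by
    have hterm : ∀ k : Fin (t+1), (2:ℝ≥0∞)⁻¹ ^ (k:ℕ) * PMF.binomial ((2:ℝ≥0∞)/n).toNNReal hp' t k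
        = ((n:ℝ≥0∞)⁻¹) ^ (k:ℕ) * (1 - 2/n) ^ (t - (k:ℕ)) * (t.choose k : ℕ) := by
      intro k
      rw [PMF.binomial_apply]
      rw [ENNReal.coe_toNNReal (ENNReal.div_ne_top (by norm_num) hne)]
      simp only [Fin.val_last]
      rw [← mul_assoc, ← mul_assoc, ← mul_pow]
      congr 2
      rw [div_eq_mul_inv, ← mul_assoc,
        ENNReal.inv_mul_cancel (by norm_num) (by norm_num), one_mul]
    rw [Finset.sum_congr rfl (fun k _ => hterm k)]
    rw [Finset.sum_fin_eq_sum_range]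
    have hcongr : ∑ i ∈ Finset.range (t+1),
        (if h : i < t + 1 then ((n:ℝ≥0∞)⁻¹) ^ ((⟨i,h⟩ : Fin (t+1)):ℕ) * (1 - 2/n) ^ (t - ((⟨i,h⟩ : Fin (t+1)):ℕ)) * (t.choose (⟨i,h⟩ : Fin (t+1)) : ℕ) else 0)
        = ∑ i ∈ Finset.range (t+1), ((n:ℝ≥0∞)⁻¹) ^ i * (1 - 2/n) ^ (t - i) * (t.choose i : ℕ) := by
      apply Finset.sum_congr rfl
      intro i hi
      rw [Finset.mem_range] at hi
      rw [dif_pos hi]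
    rw [hcongr, ← add_pow]
    congr 1
    have h2n : (2:ℝ≥0∞)/n = 1/n + 1/n := by
      rw [ENNReal.div_add_div_same]; norm_num
    have h1nt : (1:ℝ≥0∞)/n ≠ ⊤ := by
      simp [ENNReal.div_eq_top, hne]
    have hle : (1:ℝ≥0∞)/n ≤ 1 - 1/n := by
      apply ENNReal.le_sub_of_add_le_left h1nt
      rw [← h2n]; exact hp
    rw [h2n, ← tsub_tsub, ← one_div]
    rw [add_comm]
    exact tsub_add_cancel_of_le hle
  rw [hsum]
  -- now the purely analytic bound
  have h1nR : (0:ℝ) ≤ 1 - 1/(n:ℝ) := by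
    have : 1/(n:ℝ) ≤ 1/2 := by
      apply div_le_div_of_nonneg_left (by norm_num) (by norm_num)
      exact_mod_cast hn
    linarith
  have hreal : (2:ℝ) ^ M * (1 - 1/(n:ℝ)) ^ t ≤ (((n:ℝ)) ^ 3)⁻¹ := by
    have hlogn : 0 ≤ Real.log n := Real.log_nonneg (by exact_mod_cast le_trans (by norm_num : (1:ℕ) ≤ 2) hn)
    have e1 : (1 - 1/(n:ℝ)) ^ t ≤ Real.exp (-(t/n)) := by
      have hb : 1 - 1/(n:ℝ) ≤ Real.exp (-(1/n)) := by
        have := Real.add_one_le_exp (-(1/(n:ℝ))); linarith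
      calc (1 - 1/(n:ℝ)) ^ t ≤ (Real.exp (-(1/n))) ^ t := pow_le_pow_left₀ h1nR hb t
        _ = Real.exp (-(t/n)) := by
            rw [← Real.exp_nat_mul]; congr 1; field_simp
    have e2 : (2:ℝ) ^ M = Real.exp (M * Real.log 2) := by
      rw [Real.rpow_def_of_pos (by norm_num), mul_comm]
    have e3 : (((n:ℝ)) ^ 3)⁻¹ = Real.exp (-(3 * Real.log n)) := by
      rw [Real.exp_neg]
      congr 1
      rw [show (3:ℝ) * Real.log n = Real.log ((n:ℝ)^3) by
        rw [Real.log_pow]; push_cast; ring]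
      rw [Real.exp_log (by positivity)]
    rw [e2, e3]
    calc Real.exp (M * Real.log 2) * (1 - 1/(n:ℝ)) ^ t
        ≤ Real.exp (M * Real.log 2) * Real.exp (-(t/n)) := by
          exact mul_le_mul_of_nonneg_left e1 (Real.exp_nonneg _)
      _ = Real.exp (M * Real.log 2 + -(t/n)) := (Real.exp_add _ _).symm
      _ ≤ Real.exp (-(3 * Real.log n)) := by
          apply Real.exp_le_exp.2
          have hlog2 : Real.log 2 ≤ 7/10 := by
            have := Real.log_two_lt_d9; linarith
          have hα0 : (0:ℝ) < α := by linarith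
          have hMl : M * Real.log 2 ≤ (t/n) * (1/10) := by
            have hrw : M * Real.log 2 = (↑t/↑n) * (Real.log 2 / α) := by
              rw [hM, div_mul_eq_mul_div, div_mul_div_comm, mul_comm α (n:ℝ)]
            rw [hrw]
            apply mul_le_mul_of_nonneg_left _ (by positivity)
            calc Real.log 2 / α ≤ (7/10) / 7 :=
                div_le_div₀ (by norm_num) hlog2 (by norm_num) hα
              _ = 1/10 := by norm_num
          have h4 : 4 * Real.log n ≤ (t:ℝ)/n := by
            rw [le_div_iff₀ hn0]; nlinarith [ht]
          linarith
  -- transfer to ℝ≥0∞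
  have c1 : (1 - 1/(n:ℝ≥0∞)) = ENNReal.ofReal (1 - 1/(n:ℝ)) := by
    rw [ENNReal.ofReal_sub _ (by positivity), ENNReal.ofReal_one, one_div, one_div,
      ENNReal.ofReal_inv_of_pos hn0, ENNReal.ofReal_natCast]
  have c2 : (2:ℝ≥0∞) ^ M = ENNReal.ofReal ((2:ℝ) ^ M) := by
    rw [← ENNReal.ofReal_rpow_of_pos (by norm_num)]
    norm_num
  have c3 : ((n:ℝ≥0∞) ^ 3)⁻¹ = ENNReal.ofReal (((n:ℝ) ^ 3)⁻¹) := by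
    rw [ENNReal.ofReal_inv_of_pos (by positivity), ENNReal.ofReal_pow (by positivity),
      ENNReal.ofReal_natCast]
  rw [c1, c2, c3, ← ENNReal.ofReal_pow h1nR, ← ENNReal.ofReal_mul (by positivity)]
  exact ENNReal.ofReal_le_ofReal hreal
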